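/- Monotonicity of edge extension over suffixes (core of Lemma 4.2): let T be a string of length n over the alphabet A and let a ∈ A. For every i with 1 ≤ i < n, if the string T[i..n]·a (the suffix of T starting at i extended by the letter a) is represented in T, then T[i+1..n]·a is represented in T. Hence the set of positions i such that T[i..n]·a is represented in T is upward closed in [1..n]. -/

import Mathlib

/-- `w` occurs in `T` at the (1-indexed) position `p`, i.e. `1 ≤ p ≤ |T| - |w| + 1`
and `T[p..p+|w|-1] = w`. -/
def OccursAt {A : Type*} (T w : List A) (p : ℕ) : Prop :=
  1 ≤ p ∧ p + w.length ≤ T.length + 1 ∧ (T.drop (p - 1)).take w.length = w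

/-- `w` is represented in `T`: there are positions `p 1 < p 2 < ... < p |w|` such that
for each `1 ≤ ℓ ≤ |w|`, the prefix `w[1..ℓ]` occurs in `T` at position `p ℓ`. -/
def Represented {A : Type*} (T w : List A) : Prop :=
  ∃ p : ℕ → ℕ,
    (∀ i j, 1 ≤ i → i < j → j ≤ w.length → p i < p j) ∧
    (∀ ℓ, 1 ≤ ℓ → ℓ ≤ w.length → OccursAt T (w.take ℓ) (p ℓ))

lemma occurs_drop_one {A : Type*} {T u : List A} {q : ℕ} (hu : 1 ≤ u.length)
    (h : OccursAt T u q) : OccursAt T (u.drop 1) (q + 1) := by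
  obtain ⟨h1, h2, h3⟩ := h
  refine ⟨by omega, by simp [List.length_drop]; omega, ?_⟩
  have : (T.drop (q + 1 - 1)).take (u.drop 1).length
      = ((T.drop (q - 1)).take u.length).drop 1 := by
    rw [List.drop_take, List.drop_drop]
    congr 2
    · simp
    · omega
  rw [this, h3]

lemma represented_drop_one {A : Type*} {T w : List A} (h : Represented T w) :
    Represented T (w.drop 1) := by
  obtain ⟨p, hmono, hocc⟩ := h
  refine ⟨fun ℓ => p (ℓ + 1) + 1, ?_, ?_⟩
  · intro i j hi hij hj
    have := hmono (i+1) (j+1) (by omega) (by omega)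
      (by simp [List.length_drop] at hj; omega)
    dsimp only
    omega
  · intro ℓ h1 h2
    simp only [List.length_drop] at h2
    have h := hocc (ℓ + 1) (by omega) (by omega)
    have := occurs_drop_one (u := w.take (ℓ + 1)) (by simp; omega) h
    have heq : (w.take (ℓ + 1)).drop 1 = (w.drop 1).take ℓ := by
      rw [List.drop_take]; norm_num
    rwa [heq] at this

/-- Monotonicity of edge extension over suffixes (core of Lemma 4.2): for `1 ≤ i < |T|`,
if `T[i..|T|]·a` is represented in `T` then so is `T[i+1..|T|]·a`.  Hence the set of
positions `i ∈ [1..|T|]` such that `T[i..|T|]·a` is represented in `T` is upward closed. -/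
theorem represented_suffix_extension_mono {A : Type*} (T : List A) (a : A) :
    (∀ i : ℕ, 1 ≤ i → i < T.length →
      Represented T (T.drop (i - 1) ++ [a]) → Represented T (T.drop i ++ [a])) ∧
    (∀ i i' : ℕ, 1 ≤ i → i ≤ i' → i' ≤ T.length →
      Represented T (T.drop (i - 1) ++ [a]) → Represented T (T.drop (i' - 1) ++ [a])) := by
  have key : ∀ i : ℕ, 1 ≤ i → i < T.length →
      Represented T (T.drop (i - 1) ++ [a]) → Represented T (T.drop i ++ [a]) := by
    intro i hi hin h
    have h' := represented_drop_one h
    have heq : (T.drop (i - 1) ++ [a]).drop 1 = T.drop i ++ [a] := by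
      rw [List.drop_append, List.drop_drop]
      have hlen : 1 ≤ (T.drop (i - 1)).length := by simp [List.length_drop]; omega
      have e1 : i - 1 + 1 = i := by omega
      have e2 : 1 - (T.drop (i - 1)).length = 0 := by omega
      rw [e1, e2]; simp
    rwa [heq] at h'
  refine ⟨key, ?_⟩
  intro i i' hi hii' hi'n h
  induction i' with
  | zero => omega
  | succ k ih =>
    rcases Nat.eq_or_lt_of_le hii' with heq | hlt
    · subst heq; exact h
    · have hk := ih (by omega) (by omega)
      have : Represented T (T.drop (k - 1) ++ [a]) := hk
      have := key k (by omega) (by omega) this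
      simpa using this
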